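/- If K_+ and K_− are virtual knots differing by a crossing change at an even crossing c with k = W(L_c), then W_{K_+}(t) − W_{K_−}(t) = t^k + t^{−k} − 2; this difference is zero if and only if k = 0. Hence a crossing can admit a cosmetic crossing change only if it is even and classical (W(L_c) = 0). -/

import Mathlib

open scoped Classical
open LaurentPolynomial

noncomputable section

/-- A Gauss diagram for an oriented virtual knot with `n` classical crossings: a circle
with `2 * n` marked points (positions in `ZMod (2*n)`, traversed in cyclic order), and for
each crossing `c` a signed oriented chord, recorded by the position `over c` of its
over-passage (head), the position `under c` of its under-passage (tail), and its sign. -/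
structure GaussDiagram (n : ℕ) where
  over' : Fin n → ZMod (2 * n)
  under : Fin n → ZMod (2 * n)
  sign : Fin n → ℤ
  endpoints_inj : Function.Injective
    (fun p : Fin n × Bool => if p.2 then over' p.1 else under p.1)
  sign_pm : ∀ c, sign c = 1 ∨ sign c = -1

namespace GaussDiagram

/-- `x` lies strictly inside the arc running forward (in the orientation of the circle)
from `a` to `b`. -/
def Between {m : ℕ} (a b x : ZMod m) : Prop :=
  (x - a).val < (b - a).val ∧ x ≠ a

variable {n : ℕ}

/-- After orientedly smoothing the crossing `c`, the first component of the resulting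
2-component link `L_c` (the component carrying the dot placed on the incoming understrand
of `c`) is the arc running forward from the over-passage of `c` to its under-passage. -/
def onComp1 (G : GaussDiagram n) (c : Fin n) (x : ZMod (2 * n)) : Prop :=
  Between (G.over' c) (G.under c) x

/-- The chords `c` and `d` intersect (interleave): exactly one endpoint of `d` lies in the
arc cut out by `c`; equivalently `d` becomes a linking crossing of the smoothed link `L_c`. -/
def Crosses (G : GaussDiagram n) (c d : Fin n) : Prop :=
  Xor' (G.onComp1 c (G.over' d)) (G.onComp1 c (G.under d))

/-- `d ∈ P_c`: `d` intersects `c` positively (traveling along the first component of `L_c`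
one passes *over* `d`). -/
def PosAt (G : GaussDiagram n) (c d : Fin n) : Prop :=
  G.Crosses c d ∧ G.onComp1 c (G.over' d)

/-- `d ∈ N_c`: `d` intersects `c` negatively (traveling along the first component of `L_c`
one passes *under* `d`). -/
def NegAt (G : GaussDiagram n) (c d : Fin n) : Prop :=
  G.Crosses c d ∧ G.onComp1 c (G.under d)

/-- The wriggle number `W(L_c) = lk_O(L_c) - lk_U(L_c)` of the ordered 2-component link
obtained by the oriented smoothing at `c`. -/
def wriggle (G : GaussDiagram n) (c : Fin n) : ℤ :=
  (∑ d ∈ Finset.univ.filter (fun d => G.PosAt c d), G.sign d)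
    - ∑ d ∈ Finset.univ.filter (fun d => G.NegAt c d), G.sign d

/-- The writhe: the sum of the signs of all crossings. -/
def writhe (G : GaussDiagram n) : ℤ := ∑ c, G.sign c

/-- The Wriggle Polynomial `W_K(t) = Σ_c sign(c) · t^{W(L_c)} - writhe(K)`, as a Laurent
polynomial over `ℤ`. -/
def wrigglePoly (G : GaussDiagram n) : LaurentPolynomial ℤ :=
  (∑ c, C (G.sign c) * T (G.wriggle c)) - C G.writhe

end GaussDiagram

namespace GaussDiagram

variable {n : ℕ}

/-- `G'` is obtained from `G` by a crossing change at the crossing `c₁`: the over/under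
data at `c₁` is exchanged (the chord is reversed) and its sign is switched, while all
other crossings are unchanged. -/
def IsCrossingChange (G G' : GaussDiagram n) (c₁ : Fin n) : Prop :=
  G'.over' = Function.update G.over' c₁ (G.under c₁) ∧
  G'.under = Function.update G.under c₁ (G.over' c₁) ∧
  G'.sign = Function.update G.sign c₁ (-(G.sign c₁))

/-- A crossing is odd iff the two occurrences of the crossing in the Gauss code are
separated by an odd number of letters, i.e. the forward distance between the two endpoints
of its chord is even. -/
def OddCrossing (G : GaussDiagram n) (c : Fin n) : Prop :=
  Even ((G.under c - G.over' c).val)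

end GaussDiagram

open GaussDiagram

namespace CrossingChangeAux

lemma val_aux {m : ℕ} [NeZero m] {u v : ZMod m} (hu : u ≠ 0) (hv : v ≠ 0) (huv : u ≠ v) :
    u.val < v.val ↔ ¬ ((u - v).val < (-v).val) := by
  have hm : 0 < m := Nat.pos_of_ne_zero (NeZero.ne m)
  have hvval : v.val ≠ 0 := by simpa [ZMod.val_eq_zero] using hv
  have huval : u.val ≠ 0 := by simpa [ZMod.val_eq_zero] using hu
  have hneg : (-v).val = m - v.val := by rw [ZMod.neg_val]; simp [hv]
  have hsub : (u - v).val = (u.val + (m - v.val)) % m := by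
    rw [sub_eq_add_neg, ZMod.val_add, hneg]
  have hvlt : v.val < m := ZMod.val_lt v
  have hult : u.val < m := ZMod.val_lt u
  have hne : u.val ≠ v.val := fun h => huv (ZMod.val_injective _ h)
  constructor
  · intro h hlt
    rw [hsub, hneg, Nat.mod_eq_of_lt (by omega)] at hlt
    omega
  · intro h
    by_contra h2
    push_neg at h2
    apply h
    rw [hsub, hneg]
    have h3 : u.val + (m - v.val) = m + (u.val - v.val) := by omega
    rw [h3, Nat.add_mod_left, Nat.mod_eq_of_lt (by omega)]
    omega

lemma between_compl {m : ℕ} [NeZero m] {a b x : ZMod m} (hab : a ≠ b) (hxa : x ≠ a)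
    (hxb : x ≠ b) : Between a b x ↔ ¬ Between b a x := by
  have h := val_aux (u := x - a) (v := b - a) (sub_ne_zero.mpr hxa)
    (sub_ne_zero.mpr (Ne.symm hab)) (fun h => hxb (by linear_combination h))
  have h1 : x - b = (x - a) - (b - a) := by ring
  have h2 : a - b = -(b - a) := by ring
  unfold Between
  rw [h1, h2] at *
  constructor
  · rintro ⟨h3, -⟩ ⟨h4, -⟩
    exact (h.mp h3) h4
  · intro h3
    refine ⟨?_, hxa⟩
    rw [h]
    intro h4
    exact h3 ⟨h4, hxb⟩

variable {n : ℕ} {G G' : GaussDiagram n} {c : Fin n}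

lemma ep_ne (G : GaussDiagram n) {d c : Fin n} (hd : d ≠ c) (b b' : Bool) :
    (if b then G.over' d else G.under d) ≠ (if b' then G.over' c else G.under c) := fun h => by
  have := @GaussDiagram.endpoints_inj n G (d, b) (c, b') h
  simp [Prod.ext_iff] at this
  exact hd this.1

lemma over_ne_under (G : GaussDiagram n) (d : Fin n) : G.over' d ≠ G.under d := fun h => by
  have := @GaussDiagram.endpoints_inj n G (d, true) (d, false) (by simpa using h)
  simp [Prod.ext_iff] at this

lemma not_crosses_self (H : GaussDiagram n) (d : Fin n) : ¬ H.Crosses d d := by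
  unfold GaussDiagram.Crosses GaussDiagram.onComp1 Between Xor'
  simp

section
variable (ho : G'.over' = Function.update G.over' c (G.under c))
  (hu : G'.under = Function.update G.under c (G.over' c))
include ho hu

/-- After the change, comp1 of `c` is the complementary arc. -/
lemma onComp1_c_iff {x : ZMod (2 * n)} (hxo : x ≠ G.over' c) (hxu : x ≠ G.under c) :
    G'.onComp1 c x ↔ ¬ G.onComp1 c x := by
  haveI : NeZero (2 * n) := ⟨by have := c.pos; omega⟩
  have hne : G.over' c ≠ G.under c := over_ne_under G c
  unfold GaussDiagram.onComp1
  rw [ho, hu, Function.update_self, Function.update_self]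
  rw [between_compl (Ne.symm hne) hxu hxo]

lemma posAt_c_iff {d : Fin n} (hd : d ≠ c) : G'.PosAt c d ↔ G.NegAt c d := by
  have hoo := ep_ne G hd true true
  have hou := ep_ne G hd true false
  have huo := ep_ne G hd false true
  have huu := ep_ne G hd false false
  simp only [if_true, if_false] at hoo hou huo huu
  have hOd : G'.over' d = G.over' d := by rw [ho, Function.update_of_ne hd]
  have hUd : G'.under d = G.under d := by rw [hu, Function.update_of_ne hd]
  have h1 : G'.onComp1 c (G'.over' d) ↔ ¬ G.onComp1 c (G.over' d) := by
    rw [hOd]; exact onComp1_c_iff ho hu hoo hou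
  have h2 : G'.onComp1 c (G'.under d) ↔ ¬ G.onComp1 c (G.under d) := by
    rw [hUd]; exact onComp1_c_iff ho hu huo huu
  unfold GaussDiagram.PosAt GaussDiagram.NegAt GaussDiagram.Crosses at *
  rw [h1, h2]
  unfold Xor'
  rw [xor_def, xor_def]
  tauto

lemma negAt_c_iff {d : Fin n} (hd : d ≠ c) : G'.NegAt c d ↔ G.PosAt c d := by
  have hoo := ep_ne G hd true true
  have hou := ep_ne G hd true false
  have huo := ep_ne G hd false true
  have huu := ep_ne G hd false false
  simp only [if_true, if_false] at hoo hou huo huu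
  have hOd : G'.over' d = G.over' d := by rw [ho, Function.update_of_ne hd]
  have hUd : G'.under d = G.under d := by rw [hu, Function.update_of_ne hd]
  have h1 : G'.onComp1 c (G'.over' d) ↔ ¬ G.onComp1 c (G.over' d) := by
    rw [hOd]; exact onComp1_c_iff ho hu hoo hou
  have h2 : G'.onComp1 c (G'.under d) ↔ ¬ G.onComp1 c (G.under d) := by
    rw [hUd]; exact onComp1_c_iff ho hu huo huu
  unfold GaussDiagram.PosAt GaussDiagram.NegAt GaussDiagram.Crosses at *
  rw [h1, h2]
  unfold Xor'
  rw [xor_def, xor_def]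
  tauto

/-- At other base crossings, comp1 is unchanged. -/
lemma onComp1_other {d : Fin n} (hd : d ≠ c) (x : ZMod (2 * n)) :
    G'.onComp1 d x ↔ G.onComp1 d x := by
  unfold GaussDiagram.onComp1
  rw [ho, hu, Function.update_of_ne hd, Function.update_of_ne hd]

lemma posAt_other {d e : Fin n} (hd : d ≠ c) (he : e ≠ c) :
    G'.PosAt d e ↔ G.PosAt d e := by
  have hOe : G'.over' e = G.over' e := by rw [ho, Function.update_of_ne he]
  have hUe : G'.under e = G.under e := by rw [hu, Function.update_of_ne he]
  unfold GaussDiagram.PosAt GaussDiagram.Crosses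
  rw [hOe, hUe, onComp1_other ho hu hd, onComp1_other ho hu hd]

lemma negAt_other {d e : Fin n} (hd : d ≠ c) (he : e ≠ c) :
    G'.NegAt d e ↔ G.NegAt d e := by
  have hOe : G'.over' e = G.over' e := by rw [ho, Function.update_of_ne he]
  have hUe : G'.under e = G.under e := by rw [hu, Function.update_of_ne he]
  unfold GaussDiagram.NegAt GaussDiagram.Crosses
  rw [hOe, hUe, onComp1_other ho hu hd, onComp1_other ho hu hd]

lemma posAt_other_c {d : Fin n} (hd : d ≠ c) : G'.PosAt d c ↔ G.NegAt d c := by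
  have hOc : G'.over' c = G.under c := by rw [ho, Function.update_self]
  have hUc : G'.under c = G.over' c := by rw [hu, Function.update_self]
  unfold GaussDiagram.PosAt GaussDiagram.NegAt GaussDiagram.Crosses
  rw [hOc, hUc, onComp1_other ho hu hd, onComp1_other ho hu hd]
  unfold Xor'
  rw [xor_def, xor_def]
  tauto

lemma negAt_other_c {d : Fin n} (hd : d ≠ c) : G'.NegAt d c ↔ G.PosAt d c := by
  have hOc : G'.over' c = G.under c := by rw [ho, Function.update_self]
  have hUc : G'.under c = G.over' c := by rw [hu, Function.update_self]
  unfold GaussDiagram.PosAt GaussDiagram.NegAt GaussDiagram.Crosses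
  rw [hOc, hUc, onComp1_other ho hu hd, onComp1_other ho hu hd]
  unfold Xor'
  rw [xor_def, xor_def]
  tauto

end

lemma wriggle_eq (H : GaussDiagram n) (d : Fin n) :
    H.wriggle d = ∑ e, ((if H.PosAt d e then H.sign e else 0)
      - (if H.NegAt d e then H.sign e else 0)) := by
  unfold GaussDiagram.wriggle
  rw [Finset.sum_sub_distrib, Finset.sum_filter, Finset.sum_filter]

section
variable (ho : G'.over' = Function.update G.over' c (G.under c))
  (hu : G'.under = Function.update G.under c (G.over' c))
  (hs : G'.sign = Function.update G.sign c (-(G.sign c)))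

include ho hu hs in
lemma wriggle_c : G'.wriggle c = -(G.wriggle c) := by
  rw [wriggle_eq, wriggle_eq, ← Finset.sum_neg_distrib]
  apply Finset.sum_congr rfl
  intro e _
  by_cases he : e = c
  · have h1 : ¬ G'.PosAt c e := fun h => not_crosses_self G' c (he ▸ h.1)
    have h2 : ¬ G'.NegAt c e := fun h => not_crosses_self G' c (he ▸ h.1)
    have h3 : ¬ G.PosAt c e := fun h => not_crosses_self G c (he ▸ h.1)
    have h4 : ¬ G.NegAt c e := fun h => not_crosses_self G c (he ▸ h.1)
    simp [h1, h2, h3, h4]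
  · have hse : G'.sign e = G.sign e := by rw [hs, Function.update_of_ne he]
    rw [posAt_c_iff ho hu he, negAt_c_iff ho hu he, hse]
    split_ifs <;> ring

include ho hu hs in
lemma wriggle_other {d : Fin n} (hd : d ≠ c) : G'.wriggle d = G.wriggle d := by
  rw [wriggle_eq, wriggle_eq]
  apply Finset.sum_congr rfl
  intro e _
  by_cases he : e = c
  · subst he
    have hse : G'.sign e = -(G.sign e) := by rw [hs, Function.update_self]
    rw [posAt_other_c ho hu hd, negAt_other_c ho hu hd, hse]
    split_ifs <;> ring
  · have hse : G'.sign e = G.sign e := by rw [hs, Function.update_of_ne he]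
    rw [posAt_other ho hu hd he, negAt_other ho hu hd he, hse]

include hs in
lemma writhe_diff : G.writhe - G'.writhe = 2 * G.sign c := by
  unfold GaussDiagram.writhe
  rw [← Finset.sum_sub_distrib, Finset.sum_eq_single c]
  · rw [hs, Function.update_self]; ring
  · intro e _ he
    rw [hs, Function.update_of_ne he, sub_self]
  · simp

end

end CrossingChangeAux

open CrossingChangeAux in
/-- If `K₊` and `K₋` are virtual knots differing by a crossing change at an
even crossing `c` (at which `K₊` is positive), then with `k = W(L_c)` one has
`W_{K₊}(t) - W_{K₋}(t) = t^k + t^{-k} - 2`, and this difference is zero iff `k = 0`.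
Hence a crossing can admit a cosmetic crossing change only if it is even and classical
(`W(L_c) = 0`). -/
theorem even_crossing_change_difference {n : ℕ} (G G' : GaussDiagram n) (c : Fin n)
    (heven : ¬ G.OddCrossing c)
    (hcc : GaussDiagram.IsCrossingChange G G' c)
    (hpos : G.sign c = 1) :
    G.wrigglePoly - G'.wrigglePoly
        = T (G.wriggle c) + T (-(G.wriggle c)) - 2 ∧
    (G.wrigglePoly - G'.wrigglePoly = 0 ↔ G.wriggle c = 0) ∧
    (G.wrigglePoly = G'.wrigglePoly ↔ G.wriggle c = 0) := by
  obtain ⟨ho, hu, hs⟩ := hcc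
  have hdiff : G.wrigglePoly - G'.wrigglePoly
      = T (G.wriggle c) + T (-(G.wriggle c)) - 2 := by
    unfold GaussDiagram.wrigglePoly
    have hsum : (∑ e, C (G.sign e) * T (G.wriggle e)) - ∑ e, C (G'.sign e) * T (G'.wriggle e)
        = T (G.wriggle c) + T (-(G.wriggle c)) := by
      rw [← Finset.sum_sub_distrib, Finset.sum_eq_single c]
      · rw [wriggle_c ho hu hs, hs, Function.update_self, hpos]
        push_cast [map_neg, map_one]
        ring
      · intro e _ he
        rw [wriggle_other ho hu hs he, hs, Function.update_of_ne he, sub_self]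
      · simp
    have hwr : C G.writhe - C G'.writhe = (2 : LaurentPolynomial ℤ) := by
      rw [← map_sub, writhe_diff hs, hpos]
      norm_num
    calc (∑ e, C (G.sign e) * T (G.wriggle e)) - C G.writhe
          - ((∑ e, C (G'.sign e) * T (G'.wriggle e)) - C G'.writhe)
        = ((∑ e, C (G.sign e) * T (G.wriggle e))
            - ∑ e, C (G'.sign e) * T (G'.wriggle e)) - (C G.writhe - C G'.writhe) := by ring
      _ = T (G.wriggle c) + T (-(G.wriggle c)) - 2 := by rw [hsum, hwr]
  have hiff : G.wrigglePoly - G'.wrigglePoly = 0 ↔ G.wriggle c = 0 := by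
    rw [hdiff]
    constructor
    · intro h
      by_contra hk
      have h2 : ((2 : LaurentPolynomial ℤ)) = C 2 := by norm_num
      have := congrArg (fun p : LaurentPolynomial ℤ => p.coeff (G.wriggle c)) h
      beta_reduce at this
      rw [h2] at this
      rw [show ((T (G.wriggle c) + T (-G.wriggle c) - C 2 : LaurentPolynomial ℤ)).coeff (G.wriggle c)
          = (T (G.wriggle c) : LaurentPolynomial ℤ).coeff (G.wriggle c)
            + (T (-G.wriggle c) : LaurentPolynomial ℤ).coeff (G.wriggle c)
            - (C (2:ℤ) : LaurentPolynomial ℤ).coeff (G.wriggle c) from rfl] at this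
      rw [T_apply, T_apply, C_apply] at this
      have hne : -(G.wriggle c) ≠ G.wriggle c := by omega
      simp [hk, hne] at this
    · intro h
      rw [h]
      norm_num
  refine ⟨hdiff, hiff, ?_⟩
  rw [← hiff, sub_eq_zero]
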